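/- For any gain graph Φ with finite gain group 𝔊 and underlying graph Γ, the total chromatic polynomial satisfies χ̃_Φ(q,z) = ∑_{W ⊆ V} χ_{Γ|W^c}(z) · χ*_{Φ|W}(q − z), where χ is the ordinary chromatic polynomial of the induced subgraph of Γ on W^c and χ* is the zero-free chromatic polynomial of the induced gain subgraph on W. -/

import Mathlib

/-- A finite gain graph with gain group `𝔊`: each edge is given with a chosen orientation
`src e → tgt e` and its gain in that orientation (its gain in the reverse orientation
being the inverse). -/
structure GG (𝔊 : Type) [Group 𝔊] : Type 1 where
  V : Type
  E : Type
  fV : Fintype V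
  fE : Fintype E
  src : E → V
  tgt : E → V
  gain : E → 𝔊

attribute [instance] GG.fV GG.fE

variable {𝔊 : Type} [Group 𝔊]

/-- Switching a gain graph by a switching function `η`. -/
def GG.switch (Φ : GG 𝔊) (η : Φ.V → 𝔊) : GG 𝔊 :=
  { Φ with gain := fun e => (η (Φ.src e))⁻¹ * Φ.gain e * η (Φ.tgt e) }

open Classical in
/-- Contract the edges of `S` (identifying the endpoints of each edge of `S`) and delete
the edges of `D`, keeping the gains of the remaining edges.  `Φ.contractDel ∅ D` is
deletion of `D`, and `Φ.contractDel {e} {e}` is contraction `Φ/e` of a neutral edge `e`. -/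
noncomputable def GG.contractDel (Φ : GG 𝔊) (S D : Finset Φ.E) : GG 𝔊 where
  V := Quot (fun x y : Φ.V => ∃ e ∈ S, x = Φ.src e ∧ y = Φ.tgt e)
  E := {e' : Φ.E // e' ∉ D}
  fV := @Fintype.ofSurjective _ _ (Classical.decEq _) _ (Quot.mk _)
      (fun q => Quot.exists_rep q)
  fE := inferInstance
  src := fun e' => Quot.mk _ (Φ.src e'.1)
  tgt := fun e' => Quot.mk _ (Φ.tgt e'.1)
  gain := fun e' => Φ.gain e'.1

/-- The source of a directed edge (an edge together with a direction of traversal). -/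
def GG.dsrc (Φ : GG 𝔊) (p : Φ.E × Bool) : Φ.V := if p.2 then Φ.src p.1 else Φ.tgt p.1

/-- The target of a directed edge. -/
def GG.dtgt (Φ : GG 𝔊) (p : Φ.E × Bool) : Φ.V := if p.2 then Φ.tgt p.1 else Φ.src p.1

/-- The gain of a directed edge. -/
def GG.dgain (Φ : GG 𝔊) (p : Φ.E × Bool) : 𝔊 := if p.2 then Φ.gain p.1 else (Φ.gain p.1)⁻¹

/-- `w` is a circle of the edge set `S`: a nonempty closed walk using edges of `S`, with
no repeated edges and no repeated vertices. -/
structure GG.IsCircle (Φ : GG 𝔊) (S : Finset Φ.E) (w : List (Φ.E × Bool)) : Prop where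
  ne : w ≠ []
  mem : ∀ p ∈ w, p.1 ∈ S
  chain : w.Chain' fun p q => Φ.dtgt p = Φ.dsrc q
  closed : ∀ h : w ≠ [], Φ.dtgt (w.getLast h) = Φ.dsrc (w.head h)
  edgesNodup : (w.map Prod.fst).Nodup
  vertsNodup : (w.map Φ.dsrc).Nodup

/-- The simple graph on the vertices of `Φ` whose adjacency is given by the edges in `S`. -/
def GG.compGraph (Φ : GG 𝔊) (S : Finset Φ.E) : SimpleGraph Φ.V :=
  SimpleGraph.fromRel fun a b => ∃ e ∈ S, Φ.src e = a ∧ Φ.tgt e = b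

/-- `c(S)`: the number of connected components of the spanning subgraph `(V, S)`. -/
noncomputable def GG.c (Φ : GG 𝔊) (S : Finset Φ.E) : ℕ :=
  Nat.card (Φ.compGraph S).ConnectedComponent

/-- A component of `(V, S)` is balanced if every circle of `S` lying in it has gain equal
to the identity. -/
def GG.BalancedComp (Φ : GG 𝔊) (S : Finset Φ.E) (C : (Φ.compGraph S).ConnectedComponent) :
    Prop :=
  ∀ w, Φ.IsCircle S w → ∀ h : w ≠ [],
    (Φ.compGraph S).connectedComponentMk (Φ.dsrc (w.head h)) = C →
      (w.map Φ.dgain).prod = 1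

/-- `b(S)`: the number of balanced components of `(V, S)`. -/
noncomputable def GG.b (Φ : GG 𝔊) (S : Finset Φ.E) : ℕ :=
  Nat.card {C : (Φ.compGraph S).ConnectedComponent // Φ.BalancedComp S C}

/-- The total chromatic polynomial `χ̃_Φ(q,z) = ∑_{S ⊆ E} (−1)^{|S|} q^{b(S)} z^{c(S)−b(S)}`. -/
noncomputable def GG.chiTotal (Φ : GG 𝔊) (q z : ℤ) : ℤ :=
  ∑ S : Finset Φ.E, (-1) ^ S.card * q ^ Φ.b S * z ^ (Φ.c S - Φ.b S)

open Classical in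
/-- The induced gain subgraph on a set `W` of vertices. -/
noncomputable def GG.induce (Φ : GG 𝔊) (W : Finset Φ.V) : GG 𝔊 where
  V := {v : Φ.V // v ∈ W}
  E := {e : Φ.E // Φ.src e ∈ W ∧ Φ.tgt e ∈ W}
  fV := inferInstance
  fE := inferInstance
  src := fun e => ⟨Φ.src e.1, e.2.1⟩
  tgt := fun e => ⟨Φ.tgt e.1, e.2.2⟩
  gain := fun e => Φ.gain e.1

/-- The chromatic polynomial of the underlying (ordinary) graph of `Φ`, via Whitney's
subset expansion `χ_Γ(z) = ∑_{S ⊆ E} (−1)^{|S|} z^{c(S)}`. -/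
noncomputable def GG.underlyingChrom (Φ : GG 𝔊) (z : ℤ) : ℤ :=
  ∑ S : Finset Φ.E, (-1) ^ S.card * z ^ Φ.c S

/-- The zero-free chromatic polynomial `χ*_Φ(q) = χ̃_Φ(q, 0)`. -/
noncomputable def GG.chiStar (Φ : GG 𝔊) (q : ℤ) : ℤ := Φ.chiTotal q 0

section ProofDev
open Classical SimpleGraph
namespace GG
variable {𝔊 : Type} [Group 𝔊] {Φ : GG 𝔊}

/-- Restrict an edge set to the induced subgraph on `W`. -/
noncomputable def resE (Φ : GG 𝔊) (W : Finset Φ.V) (S : Finset Φ.E) :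
    Finset (Φ.induce W).E :=
  Finset.univ.filter (fun e => e.1 ∈ S)

lemma mem_resE {W : Finset Φ.V} {S : Finset Φ.E} {e : (Φ.induce W).E} :
    e ∈ Φ.resE W S ↔ e.1 ∈ S := by simp [resE]

lemma compGraph_adj {S : Finset Φ.E} {a b : Φ.V} :
    (Φ.compGraph S).Adj a b ↔ a ≠ b ∧
      ((∃ e ∈ S, Φ.src e = a ∧ Φ.tgt e = b) ∨ (∃ e ∈ S, Φ.src e = b ∧ Φ.tgt e = a)) := by
  simp [compGraph, SimpleGraph.fromRel_adj]

section Cross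

variable {S : Finset Φ.E} {W : Finset Φ.V}

/-- `S` has no edge crossing the boundary of `W`. -/
def NoCross (Φ : GG 𝔊) (S : Finset Φ.E) (W : Finset Φ.V) : Prop :=
  ∀ e ∈ S, (Φ.src e ∈ W ↔ Φ.tgt e ∈ W)

lemma NoCross.compl (hcr : Φ.NoCross S W) : Φ.NoCross S Wᶜ := by
  intro e he
  simp only [Finset.mem_compl]
  exact not_congr (hcr e he)

lemma adj_mem (hcr : Φ.NoCross S W) {u v : Φ.V}
    (h : (Φ.compGraph S).Adj u v) (hu : u ∈ W) : v ∈ W := by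
  rcases compGraph_adj.1 h with ⟨-, h | h⟩ <;> rcases h with ⟨e, he, h1, h2⟩ <;>
      subst h1 <;> subst h2
  · exact (hcr e he).1 hu
  · exact (hcr e he).2 hu

lemma walk_mem (hcr : Φ.NoCross S W) :
    ∀ {u v : Φ.V}, (Φ.compGraph S).Walk u v → u ∈ W → v ∈ W
  | _, _, SimpleGraph.Walk.nil, hu => hu
  | _, _, SimpleGraph.Walk.cons h p, hu => walk_mem hcr p (adj_mem hcr h hu)

lemma reach_mem (hcr : Φ.NoCross S W) {u v : Φ.V}
    (h : (Φ.compGraph S).Reachable u v) (hu : u ∈ W) : v ∈ W := by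
  obtain ⟨p⟩ := h; exact walk_mem hcr p hu

lemma adj_lift {u v : Φ.V} (hu : u ∈ W) (hv : v ∈ W)
    (h : (Φ.compGraph S).Adj u v) :
    ((Φ.induce W).compGraph (Φ.resE W S)).Adj ⟨u, hu⟩ ⟨v, hv⟩ := by
  have hne : (⟨u, hu⟩ : {x : Φ.V // x ∈ W}) ≠ ⟨v, hv⟩ := by
    intro hh; exact h.ne (congrArg Subtype.val hh)
  rcases compGraph_adj.1 h with ⟨-, h | h⟩ <;> rcases h with ⟨e, he, h1, h2⟩
  · exact compGraph_adj.2 ⟨hne, Or.inl ⟨⟨e, h1 ▸ hu, h2 ▸ hv⟩, mem_resE.2 he,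
      Subtype.ext h1, Subtype.ext h2⟩⟩
  · exact compGraph_adj.2 ⟨hne, Or.inr ⟨⟨e, h1 ▸ hv, h2 ▸ hu⟩, mem_resE.2 he,
      Subtype.ext h1, Subtype.ext h2⟩⟩

lemma adj_proj {a b : (Φ.induce W).V}
    (h : ((Φ.induce W).compGraph (Φ.resE W S)).Adj a b) :
    (Φ.compGraph S).Adj a.1 b.1 := by
  have hne : a.1 ≠ b.1 := fun hh => h.ne (Subtype.ext hh)
  rcases compGraph_adj.1 h with ⟨-, h | h⟩ <;> rcases h with ⟨e, he, h1, h2⟩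
  · exact compGraph_adj.2 ⟨hne, Or.inl ⟨e.1, mem_resE.1 he,
      congrArg Subtype.val h1, congrArg Subtype.val h2⟩⟩
  · exact compGraph_adj.2 ⟨hne, Or.inr ⟨e.1, mem_resE.1 he,
      congrArg Subtype.val h1, congrArg Subtype.val h2⟩⟩

lemma walk_lift (hcr : Φ.NoCross S W) :
    ∀ {u v : Φ.V}, (Φ.compGraph S).Walk u v → ∀ (hu : u ∈ W) (hv : v ∈ W),
      ((Φ.induce W).compGraph (Φ.resE W S)).Reachable ⟨u, hu⟩ ⟨v, hv⟩
  | _, _, SimpleGraph.Walk.nil, _, _ => Reachable.refl _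
  | _, _, SimpleGraph.Walk.cons h p, hu, hv =>
      ((adj_lift hu (adj_mem hcr h hu) h).reachable).trans
        (walk_lift hcr p (adj_mem hcr h hu) hv)

lemma reach_lift (hcr : Φ.NoCross S W) {u v : Φ.V}
    (h : (Φ.compGraph S).Reachable u v) (hu : u ∈ W) (hv : v ∈ W) :
    ((Φ.induce W).compGraph (Φ.resE W S)).Reachable ⟨u, hu⟩ ⟨v, hv⟩ := by
  obtain ⟨p⟩ := h; exact walk_lift hcr p hu hv

lemma walk_proj : ∀ {a b : (Φ.induce W).V},
    ((Φ.induce W).compGraph (Φ.resE W S)).Walk a b → (Φ.compGraph S).Reachable a.1 b.1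
  | _, _, SimpleGraph.Walk.nil => Reachable.refl _
  | _, _, SimpleGraph.Walk.cons h p => ((adj_proj h).reachable).trans (walk_proj p)

lemma reach_proj {a b : (Φ.induce W).V}
    (h : ((Φ.induce W).compGraph (Φ.resE W S)).Reachable a b) :
    (Φ.compGraph S).Reachable a.1 b.1 := by
  obtain ⟨p⟩ := h; exact walk_proj p

end Cross

end GG
end ProofDev
section ProofDev2
open Classical SimpleGraph
namespace GG
variable {𝔊 : Type} [Group 𝔊] {Φ : GG 𝔊} {S : Finset Φ.E} {W : Finset Φ.V}

lemma walk_invariant {α β : Type*} {G : SimpleGraph α} {f : α → β}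
    (h : ∀ u v, G.Adj u v → f u = f v) :
    ∀ {u v : α}, G.Walk u v → f u = f v
  | _, _, SimpleGraph.Walk.nil => rfl
  | _, _, SimpleGraph.Walk.cons ha p => (h _ _ ha).trans (walk_invariant h p)

noncomputable def toSumFun (Φ : GG 𝔊) (S : Finset Φ.E) (W : Finset Φ.V) (v : Φ.V) :
    ((Φ.induce W).compGraph (Φ.resE W S)).ConnectedComponent ⊕
      ((Φ.induce Wᶜ).compGraph (Φ.resE Wᶜ S)).ConnectedComponent :=
  if h : v ∈ W
    then Sum.inl (((Φ.induce W).compGraph (Φ.resE W S)).connectedComponentMk ⟨v, h⟩)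
    else Sum.inr (((Φ.induce Wᶜ).compGraph (Φ.resE Wᶜ S)).connectedComponentMk
      ⟨v, Finset.mem_compl.2 h⟩)

lemma toSumFun_adj (hcr : Φ.NoCross S W) {u v : Φ.V} (ha : (Φ.compGraph S).Adj u v) :
    Φ.toSumFun S W u = Φ.toSumFun S W v := by
  unfold toSumFun
  by_cases hu : u ∈ W
  · have hv : v ∈ W := adj_mem hcr ha hu
    rw [dif_pos hu, dif_pos hv]
    exact congrArg _ (ConnectedComponent.sound (SimpleGraph.Adj.reachable (adj_lift hu hv ha)))
  · have hv : v ∉ W := fun hv => hu (adj_mem hcr ha.symm hv)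
    rw [dif_neg hu, dif_neg hv]
    exact congrArg _ (ConnectedComponent.sound (SimpleGraph.Adj.reachable
      (adj_lift (Finset.mem_compl.2 hu) (Finset.mem_compl.2 hv) ha)))

/-- Components of `(V,S)` split as components inside `W` plus components inside `Wᶜ`,
provided no edge of `S` crosses. -/
noncomputable def splitCC (hcr : Φ.NoCross S W) :
    (Φ.compGraph S).ConnectedComponent ≃
      ((Φ.induce W).compGraph (Φ.resE W S)).ConnectedComponent ⊕
      ((Φ.induce Wᶜ).compGraph (Φ.resE Wᶜ S)).ConnectedComponent where
  toFun := ConnectedComponent.lift (Φ.toSumFun S W)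
    (fun _ _ p _ => walk_invariant (fun _ _ ha => toSumFun_adj hcr ha) p)
  invFun := Sum.elim
    (ConnectedComponent.lift (fun v => (Φ.compGraph S).connectedComponentMk v.1)
      (fun _ _ p _ => walk_invariant
        (fun _ _ ha => ConnectedComponent.sound (adj_proj ha).reachable) p))
    (ConnectedComponent.lift (fun v => (Φ.compGraph S).connectedComponentMk v.1)
      (fun _ _ p _ => walk_invariant
        (fun _ _ ha => ConnectedComponent.sound (adj_proj ha).reachable) p))
  left_inv := by
    refine ConnectedComponent.ind (fun v => ?_)
    by_cases h : v ∈ W <;> simp [toSumFun, h] <;> rfl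
  right_inv := by
    rintro (c | c) <;> refine ConnectedComponent.ind (fun v => ?_) c
    · have : v.1 ∈ W := v.2
      simp [toSumFun, this]
      rfl
    · have : v.1 ∉ W := Finset.mem_compl.1 v.2
      simp [toSumFun, this]
      rfl

lemma splitCC_mk (hcr : Φ.NoCross S W) {v : Φ.V} (hv : v ∈ W) :
    splitCC hcr ((Φ.compGraph S).connectedComponentMk v) =
      Sum.inl (((Φ.induce W).compGraph (Φ.resE W S)).connectedComponentMk ⟨v, hv⟩) := by
  simp [splitCC, toSumFun, hv]

lemma splitCC_mk' (hcr : Φ.NoCross S W) {v : Φ.V} (hv : v ∉ W) :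
    splitCC hcr ((Φ.compGraph S).connectedComponentMk v) =
      Sum.inr (((Φ.induce Wᶜ).compGraph (Φ.resE Wᶜ S)).connectedComponentMk
        ⟨v, Finset.mem_compl.2 hv⟩) := by
  simp [splitCC, toSumFun, hv]

lemma splitCC_symm_inl (hcr : Φ.NoCross S W) (x : (Φ.induce W).V) :
    (splitCC hcr).symm (Sum.inl
        (((Φ.induce W).compGraph (Φ.resE W S)).connectedComponentMk x)) =
      (Φ.compGraph S).connectedComponentMk x.1 := by
  simp [splitCC]

lemma c_split (hcr : Φ.NoCross S W) :
    Φ.c S = (Φ.induce W).c (Φ.resE W S) + (Φ.induce Wᶜ).c (Φ.resE Wᶜ S) := by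
  unfold GG.c
  rw [Nat.card_congr (splitCC hcr), Nat.card_sum]

end GG
end ProofDev2
section ProofDev3
open Classical SimpleGraph
namespace GG
variable {𝔊 : Type} [Group 𝔊] {Φ : GG 𝔊} {S : Finset Φ.E} {W : Finset Φ.V}

/-- Project a directed edge of the induced subgraph to one of the ambient graph. -/
def projDE (Φ : GG 𝔊) (W : Finset Φ.V) (p : (Φ.induce W).E × Bool) : Φ.E × Bool :=
  (p.1.1, p.2)

lemma list_getLast_eq {α : Type*} {l l' : List α} (h : l = l') (hl : l ≠ []) :
    l.getLast hl = l'.getLast (by rw [← h]; exact hl) := by subst h; rfl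

lemma list_head_eq {α : Type*} {l l' : List α} (h : l = l') (hl : l ≠ []) :
    l.head hl = l'.head (by rw [← h]; exact hl) := by subst h; rfl

lemma dsrc_proj (p : (Φ.induce W).E × Bool) :
    Φ.dsrc (Φ.projDE W p) = ((Φ.induce W).dsrc p).1 := by
  rcases p with ⟨e, b⟩; cases b <;> rfl

lemma dtgt_proj (p : (Φ.induce W).E × Bool) :
    Φ.dtgt (Φ.projDE W p) = ((Φ.induce W).dtgt p).1 := by
  rcases p with ⟨e, b⟩; cases b <;> rfl

lemma dgain_proj (p : (Φ.induce W).E × Bool) :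
    Φ.dgain (Φ.projDE W p) = (Φ.induce W).dgain p := by
  rcases p with ⟨e, b⟩; cases b <;> rfl

lemma dmem_iff (hcr : Φ.NoCross S W) {p : Φ.E × Bool} (hp : p.1 ∈ S) :
    (Φ.dsrc p ∈ W ↔ Φ.dtgt p ∈ W) := by
  rcases p with ⟨e, b⟩
  cases b
  · simpa [dsrc, dtgt] using (hcr e hp).symm
  · simpa [dsrc, dtgt] using hcr e hp

/-- Along a chain of edges of `S` starting in `W`, all endpoints stay in `W`. -/
lemma chain_mem_W (hcr : Φ.NoCross S W) :
    ∀ (w : List (Φ.E × Bool)), w.Chain' (fun p q => Φ.dtgt p = Φ.dsrc q) →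
      (∀ p ∈ w, p.1 ∈ S) → (∀ h : w ≠ [], Φ.dsrc (w.head h) ∈ W) →
      ∀ p ∈ w, Φ.dsrc p ∈ W ∧ Φ.dtgt p ∈ W
  | [], _, _, _ => by intro p hp; simp at hp
  | a :: t, hch, hmem, hhead => by
    have ha : Φ.dsrc a ∈ W := hhead (by simp)
    have ha' : Φ.dtgt a ∈ W := (dmem_iff hcr (hmem a (by simp))).1 ha
    intro p hp
    rcases List.mem_cons.1 hp with rfl | hp
    · exact ⟨ha, ha'⟩
    · refine chain_mem_W hcr t hch.tail (fun q hq => hmem q (List.mem_cons_of_mem _ hq))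
        ?_ p hp
      intro ht
      rcases t with - | ⟨b, t'⟩
      · exact absurd rfl ht
      · have : Φ.dtgt a = Φ.dsrc b := (List.isChain_cons_cons.1 hch).1
        simpa [← this] using ha'

lemma circle_endpoints (hcr : Φ.NoCross S W) {w : List (Φ.E × Bool)}
    (hw : Φ.IsCircle S w) (hhead : ∀ h : w ≠ [], Φ.dsrc (w.head h) ∈ W) :
    ∀ p ∈ w, Φ.src p.1 ∈ W ∧ Φ.tgt p.1 ∈ W := by
  intro p hp
  have h := chain_mem_W hcr w hw.chain hw.mem hhead p hp
  rcases p with ⟨e, b⟩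
  cases b
  · exact ⟨h.2, h.1⟩
  · exact ⟨h.1, h.2⟩

/-- Projecting a circle of the induced subgraph gives a circle of the ambient graph. -/
lemma isCircle_proj {w : List ((Φ.induce W).E × Bool)}
    (hw : (Φ.induce W).IsCircle (Φ.resE W S) w) :
    Φ.IsCircle S (w.map (Φ.projDE W)) where
  ne := by
    intro h; exact hw.ne (List.map_eq_nil_iff.1 h)
  mem := by
    intro p hp
    rw [List.mem_map] at hp
    obtain ⟨q, hq, rfl⟩ := hp
    exact mem_resE.1 (hw.mem q hq)
  chain := by
    unfold List.Chain'
    rw [List.isChain_map]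
    exact hw.chain.imp (fun p q h => by rw [dtgt_proj, dsrc_proj, h])
  closed := by
    intro h
    have h' : w ≠ [] := fun hh => h (by simp [hh])
    rw [List.getLast_map, List.head_map, dtgt_proj, dsrc_proj, hw.closed h']
  edgesNodup := by
    have : (w.map (Φ.projDE W)).map Prod.fst = (w.map Prod.fst).map Subtype.val := by
      simp [List.map_map, projDE]
      exact (List.map_map (g := Subtype.val) (f := Prod.fst) (l := w)).symm
    rw [this]
    exact hw.edgesNodup.map Subtype.val_injective
  vertsNodup := by
    have : (w.map (Φ.projDE W)).map Φ.dsrc = (w.map (Φ.induce W).dsrc).map Subtype.val := by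
      simp only [List.map_map]
      exact (List.map_congr_left (fun p _ => dsrc_proj p)).trans (List.map_map (g := Subtype.val) (f := (Φ.induce W).dsrc) (l := w)).symm
    rw [this]
    exact hw.vertsNodup.map Subtype.val_injective
  
lemma gains_proj (w : List ((Φ.induce W).E × Bool)) :
    (w.map (Φ.projDE W)).map Φ.dgain = w.map (Φ.induce W).dgain := by
  simp only [List.map_map]
  exact List.map_congr_left (fun p _ => dgain_proj p)

/-- A circle of the ambient graph starting in `W` lifts to the induced subgraph. -/
lemma isCircle_lift (hcr : Φ.NoCross S W) {w : List (Φ.E × Bool)}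
    (hw : Φ.IsCircle S w) (hhead : ∀ h : w ≠ [], Φ.dsrc (w.head h) ∈ W) :
    ∃ w' : List ((Φ.induce W).E × Bool),
      (Φ.induce W).IsCircle (Φ.resE W S) w' ∧ w'.map (Φ.projDE W) = w := by
  have hend := circle_endpoints hcr hw hhead
  set w' : List ((Φ.induce W).E × Bool) := w.attach.map (fun q =>
    ((⟨q.1.1, (hend q.1 q.2).1, (hend q.1 q.2).2⟩ : (Φ.induce W).E), q.1.2)) with hw'def
  have hproj : w'.map (Φ.projDE W) = w := by
    rw [hw'def, List.map_map]
    exact List.attach_map_subtype_val w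
  refine ⟨w', ⟨?_, ?_, ?_, ?_, ?_, ?_⟩, hproj⟩
  · intro h
    exact hw.ne (by rw [← hproj, h]; rfl)
  · intro q hq
    rw [hw'def, List.mem_map] at hq
    obtain ⟨r, hr, rfl⟩ := hq
    exact mem_resE.2 (hw.mem r.1 r.2)
  · have hch := hw.chain
    unfold List.Chain' at hch
    rw [← hproj, List.isChain_map] at hch
    exact hch.imp (fun p q h => Subtype.ext (by rw [← dtgt_proj, ← dsrc_proj]; exact h))
  · intro h
    have hw0 : w ≠ [] := hw.ne
    apply Subtype.ext
    rw [← dtgt_proj, ← dsrc_proj]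
    have hm : w'.map (Φ.projDE W) ≠ [] := by rw [hproj]; exact hw0
    have h1 : Φ.projDE W (w'.getLast h) = w.getLast hw0 := by
      rw [← List.getLast_map (f := Φ.projDE W) (l := w') hm]
      exact list_getLast_eq hproj hm
    have h2 : Φ.projDE W (w'.head h) = w.head hw0 := by
      rw [← List.head_map (f := Φ.projDE W) (l := w') hm]
      exact list_head_eq hproj hm
    rw [h1, h2]
    exact hw.closed hw0
  · apply List.Nodup.of_map Subtype.val
    have h1 : (w'.map Prod.fst).map Subtype.val = w.map Prod.fst := by
      rw [← hproj]
      simp [List.map_map, projDE]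
      exact List.map_map (g := Subtype.val) (f := Prod.fst) (l := w')
    rw [h1]
    exact hw.edgesNodup
  · apply List.Nodup.of_map Subtype.val
    have h1 : (w'.map (Φ.induce W).dsrc).map Subtype.val = w.map Φ.dsrc := by
      rw [← hproj]
      simp only [List.map_map]
      exact (List.map_map (g := Subtype.val) (f := (Φ.induce W).dsrc) (l := w')).trans (List.map_congr_left (fun p _ => (dsrc_proj p).symm))
    rw [h1]
    exact hw.vertsNodup

end GG
end ProofDev3
section ProofDev4
open Classical SimpleGraph
namespace GG
variable {𝔊 : Type} [Group 𝔊] {Φ : GG 𝔊} {S : Finset Φ.E} {W : Finset Φ.V}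

lemma bal_iff (hcr : Φ.NoCross S W) {v : Φ.V} (hv : v ∈ W) :
    Φ.BalancedComp S ((Φ.compGraph S).connectedComponentMk v) ↔
      (Φ.induce W).BalancedComp (Φ.resE W S)
        (((Φ.induce W).compGraph (Φ.resE W S)).connectedComponentMk ⟨v, hv⟩) := by
  constructor
  · intro hb w' hw' h' hcomp
    have hw := isCircle_proj (S := S) hw'
    have hne : w'.map (Φ.projDE W) ≠ [] := fun hh => h' (List.map_eq_nil_iff.1 hh)
    have hreach : ((Φ.induce W).compGraph (Φ.resE W S)).Reachable
        ((Φ.induce W).dsrc (w'.head h')) ⟨v, hv⟩ := ConnectedComponent.eq.1 hcomp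
    have hcomp2 : (Φ.compGraph S).connectedComponentMk
        (Φ.dsrc ((w'.map (Φ.projDE W)).head hne)) =
        (Φ.compGraph S).connectedComponentMk v := by
      rw [List.head_map, dsrc_proj]
      exact ConnectedComponent.sound (reach_proj hreach)
    have := hb _ hw hne hcomp2
    rwa [gains_proj] at this
  · intro hb w hw hne hcomp
    have hreach : (Φ.compGraph S).Reachable (Φ.dsrc (w.head hne)) v :=
      ConnectedComponent.eq.1 hcomp
    have hheadW : Φ.dsrc (w.head hne) ∈ W := reach_mem hcr hreach.symm hv
    obtain ⟨w', hw', hproj⟩ := isCircle_lift hcr hw (fun _ => hheadW)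
    have h' : w' ≠ [] := by
      intro hh; exact hne (by rw [← hproj, hh]; rfl)
    have hval : ((Φ.induce W).dsrc (w'.head h')).1 = Φ.dsrc (w.head hne) := by
      rw [← dsrc_proj, ← List.head_map (f := Φ.projDE W) (l := w') (by rw [hproj]; exact hne)]
      exact congrArg Φ.dsrc (list_head_eq hproj _)
    have hreachW : ((Φ.induce W).compGraph (Φ.resE W S)).Reachable
        ((Φ.induce W).dsrc (w'.head h')) ⟨v, hv⟩ := by
      have := reach_lift hcr (hval ▸ hreach : (Φ.compGraph S).Reachable
          ((Φ.induce W).dsrc (w'.head h')).1 v) ((Φ.induce W).dsrc (w'.head h')).2 hv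
      exact this
    have := hb w' hw' h' (ConnectedComponent.sound hreachW)
    rw [← hproj, gains_proj]
    exact this

end GG
end ProofDev4
section ProofDev5
open Classical SimpleGraph
namespace GG
variable {𝔊 : Type} [Group 𝔊] {Φ : GG 𝔊} {S : Finset Φ.E} {W : Finset Φ.V}

/-- All components are balanced. -/
def FullyBal (Ψ : GG 𝔊) (B : Finset Ψ.E) : Prop := ∀ C, Ψ.BalancedComp B C

lemma b_le_c (Ψ : GG 𝔊) (B : Finset Ψ.E) : Ψ.b B ≤ Ψ.c B := by
  unfold GG.b GG.c
  letI : Fintype (Ψ.compGraph B).ConnectedComponent := Fintype.ofFinite _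
  rw [Nat.card_eq_fintype_card, Nat.card_eq_fintype_card]
  exact Fintype.card_subtype_le _

lemma b_eq_c (Ψ : GG 𝔊) {B : Finset Ψ.E} (h : Ψ.FullyBal B) : Ψ.b B = Ψ.c B := by
  unfold GG.b GG.c
  exact Nat.card_congr (Equiv.subtypeUnivEquiv h)

lemma b_lt_c (Ψ : GG 𝔊) {B : Finset Ψ.E} (h : ¬ Ψ.FullyBal B) : Ψ.b B < Ψ.c B := by
  unfold GG.b GG.c
  letI : Fintype (Ψ.compGraph B).ConnectedComponent := Fintype.ofFinite _
  rw [Nat.card_eq_fintype_card, Nat.card_eq_fintype_card]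
  obtain ⟨C, hC⟩ := not_forall.1 h
  exact Fintype.card_subtype_lt (x := C) hC

lemma chiStar_eq (Ψ : GG 𝔊) (q : ℤ) :
    Ψ.chiStar q = ∑ B ∈ Finset.univ.filter (fun B => Ψ.FullyBal B),
      (-1) ^ B.card * q ^ (Ψ.c B) := by
  rw [Finset.sum_filter]
  unfold chiStar chiTotal
  apply Finset.sum_congr rfl
  intro B _
  by_cases h : Ψ.FullyBal B
  · rw [if_pos h, Ψ.b_eq_c h, Nat.sub_self, pow_zero, mul_one]
  · rw [if_neg h, zero_pow (Nat.sub_pos_of_lt (Ψ.b_lt_c h)).ne', mul_zero]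

lemma card_filter_W (hcr : Φ.NoCross S W) :
    (Finset.univ.filter (fun C : (Φ.compGraph S).ConnectedComponent =>
        ∃ v, v ∈ W ∧ (Φ.compGraph S).connectedComponentMk v = C)).card =
      (Φ.induce W).c (Φ.resE W S) := by
  letI : Fintype ((Φ.induce W).compGraph (Φ.resE W S)).ConnectedComponent :=
    Fintype.ofFinite _
  have himg : (Finset.univ.filter (fun C : (Φ.compGraph S).ConnectedComponent =>
      ∃ v, v ∈ W ∧ (Φ.compGraph S).connectedComponentMk v = C)) =
      Finset.univ.image (fun c => (splitCC hcr).symm (Sum.inl c)) := by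
    ext C
    simp only [Finset.mem_filter, Finset.mem_univ, true_and, Finset.mem_image]
    constructor
    · rintro ⟨v, hv, rfl⟩
      exact ⟨((Φ.induce W).compGraph (Φ.resE W S)).connectedComponentMk ⟨v, hv⟩,
        splitCC_symm_inl hcr _⟩
    · rintro ⟨c, rfl⟩
      obtain ⟨x, hx⟩ := c.exists_rep
      refine ⟨x.1, x.2, ?_⟩
      rw [← hx]
      exact (splitCC_symm_inl hcr x).symm
  rw [himg, Finset.card_image_of_injective _
    (fun a b hab => Sum.inl.inj ((splitCC hcr).symm.injective hab)),
    Finset.card_univ]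
  unfold GG.c
  rw [Nat.card_eq_fintype_card]

end GG
end ProofDev5
section ProofDev6
open Classical SimpleGraph
namespace GG
variable {𝔊 : Type} [Group 𝔊] {Φ : GG 𝔊} {S : Finset Φ.E} {W : Finset Φ.V}

/-- `W` is a union of balanced components of `(V,S)`. -/
def Good (Φ : GG 𝔊) (S : Finset Φ.E) (W : Finset Φ.V) : Prop :=
  (∀ u v, (Φ.compGraph S).Reachable u v → (u ∈ W ↔ v ∈ W)) ∧
  (∀ v ∈ W, Φ.BalancedComp S ((Φ.compGraph S).connectedComponentMk v))

lemma Good.noCross (h : Φ.Good S W) : Φ.NoCross S W := by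
  intro e he
  by_cases heq : Φ.src e = Φ.tgt e
  · rw [heq]
  · exact h.1 _ _ (SimpleGraph.Adj.reachable
      (compGraph_adj.2 ⟨heq, Or.inl ⟨e, he, rfl, rfl⟩⟩))

/-- Combine edge sets of the two induced subgraphs into an ambient edge set. -/
noncomputable def unionE (Φ : GG 𝔊) (W : Finset Φ.V)
    (A : Finset (Φ.induce Wᶜ).E) (B : Finset (Φ.induce W).E) : Finset Φ.E :=
  A.image Subtype.val ∪ B.image Subtype.val

lemma mem_unionE {A : Finset (Φ.induce Wᶜ).E} {B : Finset (Φ.induce W).E} {e : Φ.E} :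
    e ∈ Φ.unionE W A B ↔ (∃ a ∈ A, a.1 = e) ∨ (∃ b ∈ B, b.1 = e) := by
  simp only [unionE, Finset.mem_union, Finset.mem_image]
  exact or_congr Finset.mem_image Finset.mem_image

lemma resE_unionE_W (A : Finset (Φ.induce Wᶜ).E) (B : Finset (Φ.induce W).E) :
    Φ.resE W (Φ.unionE W A B) = B := by
  ext e
  rw [mem_resE, mem_unionE]
  constructor
  · rintro (⟨a, ha, hae⟩ | ⟨b, hb, hbe⟩)
    · exact absurd (hae ▸ a.2.1) (by simpa using e.2.1)
    · exact (Subtype.ext hbe : b = e) ▸ hb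
  · intro he
    exact Or.inr ⟨e, he, rfl⟩

lemma resE_unionE_Wc (A : Finset (Φ.induce Wᶜ).E) (B : Finset (Φ.induce W).E) :
    Φ.resE Wᶜ (Φ.unionE W A B) = A := by
  ext e
  rw [mem_resE, mem_unionE]
  constructor
  · rintro (⟨a, ha, hae⟩ | ⟨b, hb, hbe⟩)
    · exact (Subtype.ext hae : a = e) ▸ ha
    · exact absurd (hbe ▸ b.2.1) (by simpa using (Finset.mem_compl.1 e.2.1))
  · intro he
    exact Or.inl ⟨e, he, rfl⟩

lemma card_unionE (A : Finset (Φ.induce Wᶜ).E) (B : Finset (Φ.induce W).E) :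
    (Φ.unionE W A B).card = A.card + B.card := by
  unfold unionE
  have hdisj : Disjoint (A.image Subtype.val) (B.image Subtype.val) := by
    rw [Finset.disjoint_left]
    rintro e he he'
    replace he := Finset.mem_image.1 he; replace he' := Finset.mem_image.1 he'
    obtain ⟨a, _, rfl⟩ := he
    obtain ⟨b, _, hb⟩ := he'
    exact absurd (hb ▸ b.2.1) (by simpa using a.2.1)
  rw [Finset.card_union_of_disjoint hdisj]
  exact congrArg₂ (· + ·) (Finset.card_image_of_injective A Subtype.val_injective)
    (Finset.card_image_of_injective B Subtype.val_injective)

lemma noCross_unionE (A : Finset (Φ.induce Wᶜ).E) (B : Finset (Φ.induce W).E) :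
    Φ.NoCross (Φ.unionE W A B) W := by
  intro e he
  rcases mem_unionE.1 he with ⟨a, _, rfl⟩ | ⟨b, _, rfl⟩
  · exact iff_of_false (by simpa using a.2.1) (by simpa using a.2.2)
  · exact iff_of_true b.2.1 b.2.2

lemma unionE_resE (h : Φ.NoCross S W) :
    Φ.unionE W (Φ.resE Wᶜ S) (Φ.resE W S) = S := by
  ext e
  rw [mem_unionE]
  constructor
  · rintro (⟨a, ha, rfl⟩ | ⟨b, hb, rfl⟩)
    · exact mem_resE.1 ha
    · exact mem_resE.1 hb
  · intro he
    by_cases hs : Φ.src e ∈ W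
    · exact Or.inr ⟨⟨e, hs, (h e he).1 hs⟩, mem_resE.2 he, rfl⟩
    · exact Or.inl ⟨⟨e, by simpa using hs, by simpa using (fun ht => hs ((h e he).2 ht))⟩,
        mem_resE.2 he, rfl⟩

lemma good_unionE (A : Finset (Φ.induce Wᶜ).E) {B : Finset (Φ.induce W).E}
    (hB : (Φ.induce W).FullyBal B) : Φ.Good (Φ.unionE W A B) W := by
  have hcr := noCross_unionE (Φ := Φ) A B
  constructor
  · intro u v hr
    exact ⟨fun hu => reach_mem hcr hr hu, fun hv => reach_mem hcr hr.symm hv⟩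
  · intro v hv
    have := (bal_iff hcr hv).2
    rw [resE_unionE_W] at this
    exact this (hB _)

lemma Good.fullyBal (h : Φ.Good S W) : (Φ.induce W).FullyBal (Φ.resE W S) := by
  intro C
  obtain ⟨x, hx⟩ := C.exists_rep
  rw [← hx]
  exact (bal_iff h.noCross x.2).1 (h.2 x.1 x.2)

end GG
end ProofDev6
section ProofDev7
open Classical SimpleGraph
namespace GG
variable {𝔊 : Type} [Group 𝔊]

lemma half2 (Φ : GG 𝔊) (q z : ℤ) (W : Finset Φ.V) :
    (Φ.induce Wᶜ).underlyingChrom z * (Φ.induce W).chiStar (q - z) =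
      ∑ S ∈ Finset.univ.filter (fun S => Φ.Good S W),
        (-1) ^ S.card * (q - z) ^ ((Φ.induce W).c (Φ.resE W S)) *
          z ^ ((Φ.induce Wᶜ).c (Φ.resE Wᶜ S)) := by
  rw [chiStar_eq, underlyingChrom, Finset.sum_mul_sum]
  rw [← Finset.sum_product']
  refine Finset.sum_nbij' (fun p => Φ.unionE W p.1 p.2)
    (fun S => (Φ.resE Wᶜ S, Φ.resE W S)) ?_ ?_ ?_ ?_ ?_
  · rintro ⟨A, B⟩ hp
    simp only [Finset.mem_product, Finset.mem_univ, true_and, Finset.mem_filter] at hp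
    simp only [Finset.mem_filter, Finset.mem_univ, true_and]
    exact good_unionE A hp
  · intro S hS
    simp only [Finset.mem_filter, Finset.mem_univ, true_and] at hS
    simp only [Finset.mem_product, Finset.mem_univ, true_and, Finset.mem_filter]
    exact hS.fullyBal
  · rintro ⟨A, B⟩ hp
    simp only [Prod.mk.injEq]
    exact ⟨resE_unionE_Wc A B, resE_unionE_W A B⟩
  · intro S hS
    simp only [Finset.mem_filter, Finset.mem_univ, true_and] at hS
    exact unionE_resE hS.noCross
  · rintro ⟨A, B⟩ hp
    simp only
    rw [resE_unionE_W, resE_unionE_Wc, card_unionE, pow_add]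
    ring

end GG
end ProofDev7
section ProofDev8
open Classical SimpleGraph
namespace GG
variable {𝔊 : Type} [Group 𝔊]

lemma half1 (Φ : GG 𝔊) (q z : ℤ) (S : Finset Φ.E) :
    (-1 : ℤ) ^ S.card * q ^ Φ.b S * z ^ (Φ.c S - Φ.b S) =
      ∑ W ∈ Finset.univ.filter (fun W => Φ.Good S W),
        (-1) ^ S.card * (q - z) ^ ((Φ.induce W).c (Φ.resE W S)) *
          z ^ ((Φ.induce Wᶜ).c (Φ.resE Wᶜ S)) := by
  letI : Fintype (Φ.compGraph S).ConnectedComponent := Fintype.ofFinite _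
  set 𝔅 := Finset.univ.filter (fun C => Φ.BalancedComp S C) with h𝔅
  have hb : Φ.b S = 𝔅.card := by
    unfold GG.b
    rw [Nat.card_eq_fintype_card, Fintype.card_subtype]
  have hbc : 𝔅.card ≤ Φ.c S := by
    rw [← hb]; exact Φ.b_le_c S
  have hqz : (q - z) + z = q := by ring
  have hexp : q ^ Φ.b S = ∑ T ∈ 𝔅.powerset, (q - z) ^ T.card * z ^ (𝔅.card - T.card) := by
    calc q ^ Φ.b S = ∏ _i ∈ 𝔅, ((q - z) + z) := by rw [Finset.prod_const, hqz, hb]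
    _ = _ := by
        rw [Finset.prod_add]
        refine Finset.sum_congr rfl (fun T hT => ?_)
        rw [Finset.prod_const, Finset.prod_const,
          Finset.card_sdiff_of_subset (Finset.mem_powerset.1 hT)]
  have main : (-1 : ℤ) ^ S.card * q ^ Φ.b S * z ^ (Φ.c S - Φ.b S) =
      ∑ T ∈ 𝔅.powerset, (-1) ^ S.card * (q - z) ^ T.card * z ^ (Φ.c S - T.card) := by
    rw [hexp, hb, Finset.mul_sum, Finset.sum_mul]
    refine Finset.sum_congr rfl (fun T hT => ?_)
    have h1 : T.card ≤ 𝔅.card := Finset.card_le_card (Finset.mem_powerset.1 hT)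
    have hz : z ^ (𝔅.card - T.card) * z ^ (Φ.c S - 𝔅.card) = z ^ (Φ.c S - T.card) := by
      rw [← pow_add, Nat.add_comm, tsub_add_tsub_cancel hbc h1]
    calc (-1 : ℤ) ^ S.card * ((q - z) ^ T.card * z ^ (𝔅.card - T.card))
          * z ^ (Φ.c S - 𝔅.card)
        = (-1) ^ S.card * (q - z) ^ T.card
          * (z ^ (𝔅.card - T.card) * z ^ (Φ.c S - 𝔅.card)) := by ring
      _ = _ := by rw [hz]
  rw [main]
  refine Finset.sum_nbij'
    (fun T => Finset.univ.filter (fun v => (Φ.compGraph S).connectedComponentMk v ∈ T))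
    (fun W => Finset.univ.filter (fun C => ∃ v, v ∈ W ∧
      (Φ.compGraph S).connectedComponentMk v = C)) ?_ ?_ ?_ ?_ ?_
  · intro T hT
    simp only [Finset.mem_filter, Finset.mem_univ, true_and]
    constructor
    · intro u v hr
      simp only [Finset.mem_filter, Finset.mem_univ, true_and,
        ConnectedComponent.sound hr]
    · intro v hv
      simp only [Finset.mem_filter, Finset.mem_univ, true_and] at hv
      have := Finset.mem_powerset.1 hT hv
      rw [h𝔅, Finset.mem_filter] at this
      exact this.2
  · intro W hW
    simp only [Finset.mem_filter, Finset.mem_univ, true_and] at hW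
    rw [Finset.mem_powerset]
    intro C hC
    simp only [Finset.mem_filter, Finset.mem_univ, true_and] at hC
    obtain ⟨v, hv, rfl⟩ := hC
    rw [h𝔅, Finset.mem_filter]
    exact ⟨Finset.mem_univ _, hW.2 v hv⟩
  · intro T hT
    ext C
    simp only [Finset.mem_filter, Finset.mem_univ, true_and]
    constructor
    · rintro ⟨v, hv, rfl⟩
      exact hv
    · intro hC
      obtain ⟨x, hx⟩ := C.exists_rep
      have hx' : (Φ.compGraph S).connectedComponentMk x = C := hx
      exact ⟨x, by rw [hx']; exact hC, hx'⟩
  · intro W hW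
    simp only [Finset.mem_filter, Finset.mem_univ, true_and] at hW
    ext v
    simp only [Finset.mem_filter, Finset.mem_univ, true_and]
    constructor
    · rintro ⟨u, hu, huv⟩
      exact (hW.1 u v (ConnectedComponent.eq.1 huv)).1 hu
    · intro hv
      exact ⟨v, hv, rfl⟩
  · intro T hT
    have hG : Φ.Good S (Finset.univ.filter
        (fun v => (Φ.compGraph S).connectedComponentMk v ∈ T)) := by
      constructor
      · intro u v hr
        simp only [Finset.mem_filter, Finset.mem_univ, true_and,
          ConnectedComponent.sound hr]
      · intro v hv
        simp only [Finset.mem_filter, Finset.mem_univ, true_and] at hv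
        have := Finset.mem_powerset.1 hT hv
        rw [h𝔅, Finset.mem_filter] at this
        exact this.2
    have hcr := hG.noCross
    have hcard : T.card = (Φ.induce (Finset.univ.filter
        (fun v => (Φ.compGraph S).connectedComponentMk v ∈ T))).c
        (Φ.resE _ S) := by
      rw [← card_filter_W hcr]
      congr 1
      ext C
      simp only [Finset.mem_filter, Finset.mem_univ, true_and]
      constructor
      · intro hC
        obtain ⟨x, hx⟩ := C.exists_rep
        have hx' : (Φ.compGraph S).connectedComponentMk x = C := hx
        exact ⟨x, by rw [hx']; exact hC, hx'⟩
      · rintro ⟨v, hv, rfl⟩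
        exact hv
    have hcsplit := c_split hcr
    beta_reduce
    congr 1
    · rw [hcard]
    · congr 1
      omega
  
end GG
end ProofDev8
open Classical in
/-- Proposition: for a gain graph `Φ` with finite gain group and underlying graph `Γ`,
`χ̃_Φ(q,z) = ∑_{W ⊆ V} χ_{Γ|Wᶜ}(z) · χ*_{Φ|W}(q − z)`. -/
theorem stmt_19 [Fintype 𝔊] (Φ : GG 𝔊) (q z : ℤ) :
    Φ.chiTotal q z =
      ∑ W : Finset Φ.V, (Φ.induce Wᶜ).underlyingChrom z * (Φ.induce W).chiStar (q - z) := by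
  unfold GG.chiTotal
  calc ∑ S : Finset Φ.E, (-1) ^ S.card * q ^ Φ.b S * z ^ (Φ.c S - Φ.b S)
      = ∑ S : Finset Φ.E, ∑ W ∈ Finset.univ.filter (fun W => Φ.Good S W),
          (-1) ^ S.card * (q - z) ^ ((Φ.induce W).c (Φ.resE W S)) *
            z ^ ((Φ.induce Wᶜ).c (Φ.resE Wᶜ S)) :=
        Finset.sum_congr rfl (fun S _ => GG.half1 Φ q z S)
    _ = ∑ W : Finset Φ.V, ∑ S ∈ Finset.univ.filter (fun S => Φ.Good S W),
          (-1) ^ S.card * (q - z) ^ ((Φ.induce W).c (Φ.resE W S)) *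
            z ^ ((Φ.induce Wᶜ).c (Φ.resE Wᶜ S)) := by
        simp only [Finset.sum_filter]
        exact Finset.sum_comm
    _ = _ := Finset.sum_congr rfl (fun W _ => (GG.half2 Φ q z W).symm)
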